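/- Let A be a G-graded algebra over a field F, I a G-graded two-sided ideal of A, and \Lambda = F[\theta_1,...,\theta_n] a commutative finitely generated F-algebra acting on I by F-linear operators commuting with left and right multiplication by elements of A. Let K be the G-graded ideal of the polynomial ring A[\lambda_1,...,\lambda_n] (with \lambda_i central of degree e) generated by the elements \lambda_i x - \theta_i x for all i and all x \in I. Then the natural map A \to A[\lambda_1,...,\lambda_n]/K is injective. -/

import Mathlib

open scoped TensorProduct

/-- The relation imposing `λ_i x = θ_i x` for `x ∈ I` on
`A[λ_1,…,λ_n] = A ⊗_F F[λ_1,…,λ_n]`. -/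
def interpRel {F : Type*} [Field F] {A : Type*} [Ring A] [Algebra F A] {n : ℕ}
    (I : TwoSidedIdeal A) (θ : Fin n → (A →ₗ[F] A)) :
    (A ⊗[F] MvPolynomial (Fin n) F) → (A ⊗[F] MvPolynomial (Fin n) F) → Prop :=
  fun p q => ∃ (i : Fin n) (x : A), x ∈ I ∧
    p = x ⊗ₜ[F] MvPolynomial.X i ∧ q = (θ i x) ⊗ₜ[F] 1

section Aux

variable {F : Type*} [Field F] {A : Type*} [Ring A] [Algebra F A] {n : ℕ}

open MvPolynomial in
/-- The linear retraction `a ⊗ f ↦ f(0) • a + φ (f - f(0)) (π a)`. -/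
noncomputable def psiAux (S : Submodule F A) (π : A →ₗ[F] S)
    (φ : MvPolynomial (Fin n) F →ₐ[F] Module.End F S) :
    A ⊗[F] MvPolynomial (Fin n) F →ₗ[F] A :=
  TensorProduct.lift
    { toFun := fun a =>
        { toFun := fun f => f.coeff 0 • a + (φ (f - C (f.coeff 0)) (π a) : A)
          map_add' := fun f g => by
            simp only [coeff_add, map_add, add_sub_add_comm, LinearMap.add_apply,
              Submodule.coe_add, add_smul]
            abel
          map_smul' := fun c f => by
            simp only [coeff_smul, smul_eq_mul]
            rw [show (C (c * f.coeff 0) : MvPolynomial (Fin n) F) = c • C (f.coeff 0) by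
              rw [MvPolynomial.C_mul, MvPolynomial.smul_eq_C_mul], ← smul_sub, map_smul]
            simp only [LinearMap.smul_apply, Submodule.coe_smul, RingHom.id_apply, smul_add,
              smul_smul, smul_eq_mul] }
      map_add' := fun a b => by
        refine LinearMap.ext fun f => ?_
        simp only [map_add, LinearMap.add_apply, Submodule.coe_add, smul_add,
          LinearMap.coe_mk, AddHom.coe_mk]
        abel
      map_smul' := fun c a => by
        refine LinearMap.ext fun f => ?_
        simp only [map_smul, LinearMap.smul_apply, Submodule.coe_smul, RingHom.id_apply,
          LinearMap.coe_mk, AddHom.coe_mk, smul_add, smul_comm c] }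

open MvPolynomial in
theorem psiAux_tmul (S : Submodule F A) (π : A →ₗ[F] S)
    (φ : MvPolynomial (Fin n) F →ₐ[F] Module.End F S) (a : A) (f : MvPolynomial (Fin n) F) :
    psiAux S π φ (a ⊗ₜ f) = f.coeff 0 • a + (φ (f - C (f.coeff 0)) (π a) : A) := rfl

open MvPolynomial in
theorem psiAux_tmul_one (S : Submodule F A) (π : A →ₗ[F] S)
    (φ : MvPolynomial (Fin n) F →ₐ[F] Module.End F S) (a : A) :
    psiAux S π φ (a ⊗ₜ 1) = a := by
  rw [psiAux_tmul]
  simp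

open MvPolynomial in
theorem psiAux_tmul_mem (S : Submodule F A) (π : A →ₗ[F] S)
    (φ : MvPolynomial (Fin n) F →ₐ[F] Module.End F S)
    (hπ : ∀ s : S, π s = s) (s : S) (f : MvPolynomial (Fin n) F) :
    psiAux S π φ ((s : A) ⊗ₜ f) = (φ f s : A) := by
  rw [psiAux_tmul, hπ]
  have h1 : φ (f - C (f.coeff 0)) s = φ f s - f.coeff 0 • s := by
    rw [map_sub, LinearMap.sub_apply]
    congr 1
    have : (C (f.coeff 0) : MvPolynomial (Fin n) F) = algebraMap F _ (f.coeff 0) := rfl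
    rw [this, AlgHom.commutes, Module.algebraMap_end_apply]
  rw [h1]
  push_cast
  abel

end Aux

/-- **Interpretation Lemma.** Let `A` be a `G`-graded algebra over `F`,
`I` a graded two-sided ideal, and `Λ = F[θ_1,…,θ_n]` a commutative finitely generated
algebra of `F`-linear operators acting on `I`, commuting with left and right
multiplication by `A`, with each other, and preserving degrees.  Let `K` be the ideal of
`A[λ_1,…,λ_n]` generated by the elements `λ_i x − θ_i x` (`x ∈ I`).  Then the natural
map `A → A[λ_1,…,λ_n]/K` is injective. -/
theorem stmt_9 {F : Type*} [Field F] {G : Type*} [Group G] [DecidableEq G]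
    {A : Type*} [Ring A] [Algebra F A]
    (𝒜 : G → Submodule F A) [DirectSum.Decomposition 𝒜]
    (hmul : ∀ g h : G, ∀ a ∈ 𝒜 g, ∀ b ∈ 𝒜 h, a * b ∈ 𝒜 (g * h))
    (I : TwoSidedIdeal A)
    (hIgr : ∀ x ∈ I, ∀ g : G, ((DirectSum.decompose 𝒜 x) g : A) ∈ I)
    (n : ℕ) (θ : Fin n → (A →ₗ[F] A))
    (hθI : ∀ i, ∀ x ∈ I, θ i x ∈ I)
    (hθl : ∀ i (a : A), ∀ x ∈ I, θ i (a * x) = a * θ i x)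
    (hθr : ∀ i (a : A), ∀ x ∈ I, θ i (x * a) = θ i x * a)
    (hθc : ∀ i j, ∀ x ∈ I, θ i (θ j x) = θ j (θ i x))
    (hθgr : ∀ i (g : G), ∀ x ∈ I, x ∈ 𝒜 g → θ i x ∈ 𝒜 g) :
    Function.Injective
      ((RingQuot.mkAlgHom F (interpRel I θ)).comp
        (Algebra.TensorProduct.includeLeft :
          A →ₐ[F] A ⊗[F] MvPolynomial (Fin n) F)) := by

  classical
  set S : Submodule F A := Submodule.restrictScalars F (TwoSidedIdeal.asIdeal I) with hSdef
  have hmemS : ∀ x : A, x ∈ S ↔ x ∈ I := fun x => by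
    simp [hSdef, TwoSidedIdeal.mem_asIdeal]
  obtain ⟨T, hT⟩ := S.exists_isCompl
  set π : A →ₗ[F] S := S.linearProjOfIsCompl T hT with hπdef
  have hπ : ∀ s : S, π s = s := fun s => Submodule.linearProjOfIsCompl_apply_left hT s
  have hres : ∀ i, ∀ x ∈ S, θ i x ∈ S := fun i x hx => (hmemS _).2 (hθI i x ((hmemS _).1 hx))
  set θ' : Fin n → Module.End F S := fun i => (θ i).restrict (hres i) with hθ'def
  have hθ'apply : ∀ i (s : S), ((θ' i) s : A) = θ i s := fun i s => rfl
  have hcomm : ∀ x ∈ Set.range θ', ∀ y ∈ Set.range θ', x * y = y * x := by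
    rintro _ ⟨i, rfl⟩ _ ⟨j, rfl⟩
    refine LinearMap.ext fun s => Subtype.ext ?_
    show θ i (θ j (s : A)) = θ j (θ i (s : A))
    exact hθc i j s ((hmemS _).1 s.2)
  letI instCR : CommRing (Algebra.adjoin F (Set.range θ')) := Algebra.adjoinCommRingOfComm (A := Module.End F S) (s := Set.range θ') F hcomm
  letI instCS : CommSemiring (Algebra.adjoin F (Set.range θ')) := instCR.toCommSemiring
  set φ : MvPolynomial (Fin n) F →ₐ[F] Module.End F S :=
    (Algebra.adjoin F (Set.range θ')).val.comp
      (MvPolynomial.aeval fun i => (⟨θ' i, Algebra.subset_adjoin ⟨i, rfl⟩⟩ :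
        Algebra.adjoin F (Set.range θ'))) with hφdef
  have hφX : ∀ i, φ (MvPolynomial.X i) = θ' i := fun i => by
    simp [hφdef]
  have hφmulX : ∀ (f : MvPolynomial (Fin n) F) i (s : S),
      φ (f * MvPolynomial.X i) s = φ f (θ' i s) := fun f i s => by
    rw [map_mul, hφX]; rfl
  have hkey : ∀ p q, RingQuot.Rel (interpRel I θ) p q →
      ∀ c d : A ⊗[F] MvPolynomial (Fin n) F,
        psiAux S π φ (c * p * d) = psiAux S π φ (c * q * d) := by
    intro p q h
    induction h with
    | of h =>
      obtain ⟨i, x, hx, rfl, rfl⟩ := h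
      intro c d
      induction c using TensorProduct.induction_on with
      | zero => simp
      | add u v hu hv => simp only [add_mul, map_add, hu, hv]
      | tmul a f =>
        induction d using TensorProduct.induction_on with
        | zero => simp
        | add u v hu hv => simp only [mul_add, map_add, hu, hv]
        | tmul b g =>
          have hm1 : x * b ∈ I := I.mul_mem_right _ _ hx
          have hm : a * x * b ∈ I := by
            rw [mul_assoc]; exact I.mul_mem_left _ _ hm1
          have hm2 : a * θ i x * b ∈ I := by
            rw [mul_assoc]
            exact I.mul_mem_left _ _ (I.mul_mem_right _ _ (hθI i x hx))
          have hθis : θ i (a * x * b) = a * θ i x * b := by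
            rw [mul_assoc, hθl i a _ hm1, hθr i b x hx, mul_assoc]
          have hs12 : θ' i (⟨a * x * b, (hmemS _).2 hm⟩ : S)
              = (⟨a * θ i x * b, (hmemS _).2 hm2⟩ : S) := Subtype.ext hθis
          calc psiAux S π φ ((a ⊗ₜ[F] f) * (x ⊗ₜ[F] MvPolynomial.X i) * (b ⊗ₜ[F] g))
              = psiAux S π φ
                  (((⟨a * x * b, (hmemS _).2 hm⟩ : S) : A) ⊗ₜ[F] (f * g * MvPolynomial.X i)) := by
                rw [Algebra.TensorProduct.tmul_mul_tmul, Algebra.TensorProduct.tmul_mul_tmul,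
                  mul_right_comm f (MvPolynomial.X i) g]
            _ = (φ (f * g * MvPolynomial.X i) (⟨a * x * b, (hmemS _).2 hm⟩ : S) : A) :=
                psiAux_tmul_mem S π φ hπ _ _
            _ = (φ (f * g) (θ' i (⟨a * x * b, (hmemS _).2 hm⟩ : S)) : A) := by
                rw [hφmulX]
            _ = (φ (f * g) (⟨a * θ i x * b, (hmemS _).2 hm2⟩ : S) : A) := by rw [hs12]
            _ = psiAux S π φ
                  (((⟨a * θ i x * b, (hmemS _).2 hm2⟩ : S) : A) ⊗ₜ[F] (f * g)) :=
                (psiAux_tmul_mem S π φ hπ _ _).symm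
            _ = psiAux S π φ ((a ⊗ₜ[F] f) * ((θ i x) ⊗ₜ[F] (1 : MvPolynomial (Fin n) F))
                  * (b ⊗ₜ[F] g)) := by
                rw [Algebra.TensorProduct.tmul_mul_tmul, Algebra.TensorProduct.tmul_mul_tmul,
                  mul_one]
    | add_left _ ih =>
      intro e d
      simp only [mul_add, add_mul, map_add]
      rw [ih e d]
    | mul_left _ ih =>
      intro e d
      have hassoc : ∀ u v w z : A ⊗[F] MvPolynomial (Fin n) F,
          u * (v * w) * z = u * v * (w * z) := by
        intros; noncomm_ring
      rw [hassoc, hassoc]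
      exact ih e _
    | mul_right _ ih =>
      intro e d
      have hassoc : ∀ u v w z : A ⊗[F] MvPolynomial (Fin n) F,
          u * (v * w) * z = (u * v) * w * z := by
        intros; noncomm_ring
      rw [hassoc, hassoc]
      exact ih (e * _) d
  have hconst : ∀ x y, Relation.EqvGen (RingQuot.Rel (interpRel I θ)) x y →
      psiAux S π φ x = psiAux S π φ y := by
    intro x y hxy
    induction hxy with
    | rel u v huv => simpa using hkey u v huv 1 1
    | refl u => rfl
    | symm u v _ ih => exact ih.symm
    | trans u v w _ _ ih1 ih2 => exact ih1.trans ih2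
  intro a b h
  simp only [AlgHom.comp_apply, Algebra.TensorProduct.includeLeft_apply] at h
  have h1 : RingQuot.mkRingHom (interpRel I θ) (a ⊗ₜ[F] 1)
      = RingQuot.mkRingHom (interpRel I θ) (b ⊗ₜ[F] 1) := by
    rw [← RingQuot.mkAlgHom_coe F]
    exact_mod_cast h
  rw [RingQuot.mkRingHom_def] at h1
  have h2 : Quot.mk (RingQuot.Rel (interpRel I θ)) (a ⊗ₜ[F] (1 : MvPolynomial (Fin n) F))
      = Quot.mk (RingQuot.Rel (interpRel I θ)) (b ⊗ₜ[F] 1) :=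
    congrArg RingQuot.toQuot h1
  have h3 := Quot.eqvGen_exact h2
  have h4 := hconst _ _ h3
  rwa [psiAux_tmul_one, psiAux_tmul_one] at h4
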